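/- arXiv:2603.08000 — 3 statements merged into one kernel-verified Lean document; each statement's English description precedes it below -/
import Mathlib

section
/- Let μ₁, μ₂ ∈ ℝ and 0 < σ₁ ≤ σ₂. Then the Gaussian density ratio R has no strict global maximizer: there is no point l₀ such that R(l) < R(l₀) for all l ≠ l₀. Combined with the existence result for σ₁ > σ₂, R has a unique strict global maximum if and only if σ₁² > σ₂². -/
/-- The Gaussian probability density with mean `μ` and standard deviation `σ`. -/
noncomputable def gaussianPDF (μ σ x : ℝ) : ℝ :=
  (1 / (σ * Real.sqrt (2 * Real.pi))) * Real.exp (-(x - μ) ^ 2 / (2 * σ ^ 2))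

/-- If `0 < σ₁ ≤ σ₂`, the density ratio `R(l) = φ_{μ₂,σ₂}(l)/φ_{μ₁,σ₁}(l)` has no strict
global maximizer; combined with the existence result for `σ₁ > σ₂`, `R` has a unique
strict global maximum iff `σ₁² > σ₂²`. -/
theorem stmt_1 (μ₁ μ₂ σ₁ σ₂ : ℝ) (hσ₁ : 0 < σ₁) (hσ₂ : 0 < σ₂)
    (R : ℝ → ℝ) (hR : ∀ l, R l = gaussianPDF μ₂ σ₂ l / gaussianPDF μ₁ σ₁ l) :
    (σ₁ ≤ σ₂ → ¬ ∃ l₀ : ℝ, ∀ l : ℝ, l ≠ l₀ → R l < R l₀) ∧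
    ((∃! l₀ : ℝ, ∀ l : ℝ, l ≠ l₀ → R l < R l₀) ↔ σ₂ ^ 2 < σ₁ ^ 2) := by
  have hs : (0:ℝ) < Real.sqrt (2 * Real.pi) := Real.sqrt_pos.mpr (by positivity)
  set g : ℝ → ℝ := fun l => (l - μ₁)^2 / (2*σ₁^2) - (l - μ₂)^2 / (2*σ₂^2) with hg
  have hkey : ∀ l, R l = (σ₁/σ₂) * Real.exp (g l) := by
    intro l
    rw [hR]
    unfold gaussianPDF
    rw [mul_div_mul_comm, ← Real.exp_sub]
    congr 1
    · field_simp
    · simp only [hg]; ring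
  have hcmp : ∀ l l₀, (R l < R l₀ ↔ g l < g l₀) := by
    intro l l₀
    rw [hkey, hkey, mul_lt_mul_iff_right₀ (by positivity), Real.exp_lt_exp]
  clear_value g
  have part1 : σ₁ ≤ σ₂ → ¬ ∃ l₀ : ℝ, ∀ l : ℝ, l ≠ l₀ → R l < R l₀ := by
    rintro hle ⟨l₀, h⟩
    have h1 : g (l₀ + 1) < g l₀ := (hcmp _ _).mp (h _ (by linarith))
    have h2 : g (l₀ - 1) < g l₀ := (hcmp _ _).mp (h _ (by linarith))
    have hsum : g (l₀ + 1) + g (l₀ - 1) - 2 * g l₀ = 1/σ₁^2 - 1/σ₂^2 := by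
      simp only [hg]; field_simp; ring
    have hge : 1/σ₂^2 ≤ 1/σ₁^2 := by
      apply one_div_le_one_div_of_le (by positivity)
      nlinarith
    nlinarith [h1, h2, hsum, hge]
  refine ⟨part1, ⟨?_, ?_⟩⟩
  · rintro ⟨l₀, hmax, -⟩
    by_contra hle'
    push_neg at hle'
    exact part1 (by nlinarith) ⟨l₀, hmax⟩
  · intro hlt
    have hd : σ₁^2 - σ₂^2 ≠ 0 := by nlinarith
    set ls : ℝ := (σ₁^2*μ₂ - σ₂^2*μ₁)/(σ₁^2 - σ₂^2) with hls
    clear_value ls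
    have hmax : ∀ l : ℝ, l ≠ ls → R l < R ls := by
      intro l hl
      rw [hcmp]
      have hdiff : g ls - g l = (σ₁^2 - σ₂^2)/(2*σ₁^2*σ₂^2) * (l - ls)^2 := by
        simp only [hg, hls]; field_simp; ring
      have hpos : 0 < (l - ls)^2 := by
        have := sub_ne_zero.mpr hl
        positivity
      have hdp : 0 < (σ₁^2 - σ₂^2)/(2*σ₁^2*σ₂^2) :=
        div_pos (by nlinarith) (by positivity)
      have := mul_pos hdp hpos
      linarith
    refine ⟨ls, hmax, fun y hy => ?_⟩
    by_contra hne
    exact absurd (hy ls (Ne.symm hne)) (not_lt.mpr (le_of_lt (hmax y hne)))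
end

section
/- Consider a GRPO group with at least one correct trajectory, and let λ > 0. Then the following are equivalent: (i) for every correct trajectory i (a_i = 1), 1 + λ·s_i ≥ (1/G)·Σ_j (a_j + λ·s_j); (ii) λ·(M − m) ≤ p^err, where M is the mean length reward, m the minimum length reward over correct trajectories, and p^err the fraction of incorrect trajectories. In particular, when M > m the constraint (i) holds for λ > 0 exactly when λ ≤ p^err/(M − m). -/
/-- In a GRPO group with at least one correct trajectory and coefficient `λ > 0`, the
constraint "every correct trajectory's total reward `1 + λ·s_i` is at least the group
mean total reward" is equivalent to `λ·(M − m) ≤ p^err`, where `M` is the mean length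
reward, `m` the minimum length reward over correct trajectories, and `p^err` the
fraction of incorrect trajectories; in particular when `M > m` this holds for `λ > 0`
exactly when `λ ≤ p^err/(M − m)`. -/
theorem stmt_11 (G : ℕ) (hG : 0 < G) (a s : Fin G → ℝ)
    (ha : ∀ i, a i = 0 ∨ a i = 1)
    (hs : ∀ i, s i ≤ 0) (hs0 : ∀ i, a i = 0 → s i = 0)
    (hcorrect : ∃ i, a i = 1)
    (lam : ℝ) (hlam : 0 < lam)
    (perr : ℝ)
    (hperr : perr = ((Finset.univ.filter fun i => a i = 0).card : ℝ) / G)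
    (M : ℝ) (hM : M = (∑ i, s i) / G)
    (m : ℝ) (hm : IsLeast {x : ℝ | ∃ i, a i = 1 ∧ s i = x} m) :
    ((∀ i, a i = 1 → (∑ j, (a j + lam * s j)) / G ≤ 1 + lam * s i) ↔
      lam * (M - m) ≤ perr) ∧
    (m < M →
      ((∀ i, a i = 1 → (∑ j, (a j + lam * s j)) / G ≤ 1 + lam * s i) ↔
        lam ≤ perr / (M - m))) := by
  have hGpos : (0:ℝ) < (G:ℝ) := by exact_mod_cast hG
  -- sum of a
  have hfilter : (Finset.univ.filter fun i => ¬ a i = 1) =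
      (Finset.univ.filter fun i => a i = 0) := by
    ext i
    simp only [Finset.mem_filter, Finset.mem_univ, true_and]
    rcases ha i with h | h <;> simp [h]
  have hsum_a : (∑ j, a j) = (G:ℝ) - ((Finset.univ.filter fun i => a i = 0).card : ℝ) := by
    rw [← Finset.sum_filter_add_sum_filter_not Finset.univ (fun i => a i = 1)]
    have h1 : (∑ j ∈ Finset.univ.filter fun i => a i = 1, a j)
        = ((Finset.univ.filter fun i => a i = 1).card : ℝ) := by
      rw [Finset.sum_congr rfl (fun j hj => (Finset.mem_filter.mp hj).2)]
      simp
    have h2 : (∑ j ∈ Finset.univ.filter fun i => ¬ a i = 1, a j) = 0 := by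
      apply Finset.sum_eq_zero
      intro j hj
      rcases ha j with h | h
      · exact h
      · exact absurd h (Finset.mem_filter.mp hj).2
    rw [h1, h2, add_zero]
    have hcard : (Finset.univ.filter fun i => a i = 1).card
        + (Finset.univ.filter fun i => a i = 0).card = G := by
      rw [← hfilter, Finset.card_filter_add_card_filter_not]
      simp
    have := congrArg (fun n : ℕ => (n:ℝ)) hcard
    push_cast at this
    linarith
  -- mean total reward
  have hmean : (∑ j, (a j + lam * s j)) / G = 1 - perr + lam * M := by
    rw [Finset.sum_add_distrib, ← Finset.mul_sum, hsum_a, hperr, hM]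
    field_simp
  -- key equivalence
  have hkey : (∀ i, a i = 1 → (∑ j, (a j + lam * s j)) / G ≤ 1 + lam * s i) ↔
      lam * (M - m) ≤ perr := by
    constructor
    · intro h
      obtain ⟨i, hi1, hi2⟩ := hm.1
      have := h i hi1
      rw [hmean] at this
      rw [hi2] at this
      linarith
    · intro h i hi
      have hmi : m ≤ s i := hm.2 ⟨i, hi, rfl⟩
      rw [hmean]
      nlinarith
  refine ⟨hkey, fun hmM => ?_⟩
  rw [hkey, le_div_iff₀ (by linarith)]
end

section
/- Consider a GRPO group containing at least one correct and at least one incorrect trajectory, and suppose some correct trajectory has strictly negative length reward (so m < 0, and since M ≥ (1 − p^err)·m and p^err > 0, M > m). Define the dynamic coefficient Λ = p^err/(M − m) > 0 and total rewards r_i = a_i + Λ·s_i. Then every correct trajectory has reward at least the group mean (r_i ≥ (1/G)·Σ_j r_j whenever a_i = 1) and every incorrect trajectory has reward at most the group mean (r_i ≤ (1/G)·Σ_j r_j whenever a_i = 0); hence the mean-centered (normalized) advantage of every correct trajectory is nonnegative and that of every incorrect trajectory is nonpositive. -/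
/-- In a GRPO group with at least one correct and at least one incorrect trajectory,
where some correct trajectory has strictly negative length reward, the dynamic
coefficient `Λ = p^err/(M − m)` is positive, and with total rewards
`r_i = a_i + Λ·s_i`, every correct trajectory's reward is at least the group mean
and every incorrect trajectory's reward is at most the group mean: the mean-centered
advantage of correct trajectories is nonnegative and that of incorrect trajectories
is nonpositive. -/
theorem stmt_14 (G : ℕ) (hG : 0 < G) (a s : Fin G → ℝ)
    (ha : ∀ i, a i = 0 ∨ a i = 1)
    (hs : ∀ i, s i ≤ 0) (hs0 : ∀ i, a i = 0 → s i = 0)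
    (hcorrect : ∃ i, a i = 1) (hincorrect : ∃ i, a i = 0)
    (hneg : ∃ i, a i = 1 ∧ s i < 0)
    (perr : ℝ)
    (hperr : perr = ((Finset.univ.filter fun i => a i = 0).card : ℝ) / G)
    (M : ℝ) (hM : M = (∑ i, s i) / G)
    (m : ℝ) (hm : IsLeast {x : ℝ | ∃ i, a i = 1 ∧ s i = x} m)
    (Lam : ℝ) (hLam : Lam = perr / (M - m))
    (r : Fin G → ℝ) (hr : ∀ i, r i = a i + Lam * s i) :
    0 < Lam ∧
    (∀ i, a i = 1 → (∑ j, r j) / G ≤ r i) ∧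
    (∀ i, a i = 0 → r i ≤ (∑ j, r j) / G) := by
  classical
  have hlb : ∀ i, a i = 1 → m ≤ s i := fun i hi => hm.2 ⟨i, hi, rfl⟩
  obtain ⟨i0, hi0a, hi0s⟩ := hneg
  have hmneg : m < 0 := lt_of_le_of_lt (hlb i0 hi0a) hi0s
  have hGR : (0:ℝ) < G := Nat.cast_pos.mpr hG
  set k := (Finset.univ.filter fun i => a i = 0).card with hk
  set c := (Finset.univ.filter fun i => a i = 1).card with hc
  have hkpos : (0:ℝ) < k := by
    obtain ⟨i1, hi1⟩ := hincorrect
    have : 0 < k := Finset.card_pos.mpr ⟨i1, by simp [hi1]⟩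
    exact_mod_cast this
  have hck : (c:ℝ) + k = G := by
    have hfe : (Finset.univ.filter fun i => a i = 0)
        = (Finset.univ.filter fun i => ¬ a i = 1) := by
      apply Finset.filter_congr
      intro i _
      rcases ha i with h | h <;> simp [h]
    have := Finset.card_filter_add_card_filter_not
      (s := (Finset.univ : Finset (Fin G))) (p := fun i => a i = 1)
    have h2 : (Finset.filter (fun i => a i = 1) Finset.univ).card
        + (Finset.filter (fun i => ¬ a i = 1) Finset.univ).card = G := by
      simpa using this
    rw [hk, hc, hfe]
    exact_mod_cast h2
  have hsum_a : ∑ i, a i = c := by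
    have h1 : ∀ i, a i = if a i = 1 then (1:ℝ) else 0 := by
      intro i; rcases ha i with h | h <;> simp [h]
    calc ∑ i, a i = ∑ i, if a i = 1 then (1:ℝ) else 0 :=
          Finset.sum_congr rfl (fun i _ => h1 i)
      _ = c := by rw [Finset.sum_boole]
  have hS : (c:ℝ) * m ≤ ∑ i, s i := by
    have h1 : ∀ i, (if a i = 1 then m else 0) ≤ s i := by
      intro i
      rcases ha i with h | h
      · rw [hs0 i h]; simp [h]
      · simpa [h] using hlb i h
    calc (c:ℝ) * m = ∑ _i ∈ Finset.univ.filter (fun i => a i = 1), m := by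
          rw [Finset.sum_const, nsmul_eq_mul]
      _ = ∑ i, if a i = 1 then m else 0 := by rw [Finset.sum_filter]
      _ ≤ ∑ i, s i := Finset.sum_le_sum (fun i _ => h1 i)
  have hMm : 0 < M - m := by
    rw [hM, lt_sub_iff_add_lt, zero_add, lt_div_iff₀ hGR]
    nlinarith
  have hLpos : 0 < Lam := by
    rw [hLam, hperr]
    exact div_pos (div_pos hkpos hGR) hMm
  have hkey : Lam * (∑ i, s i) = Lam * m * G + k := by
    have h0 : Lam * (M - m) = perr := by
      rw [hLam]; field_simp
    rw [hM, hperr] at h0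
    field_simp at h0
    linarith
  have hrsum : ∑ j, r j = c + Lam * ∑ i, s i := by
    simp only [hr, Finset.sum_add_distrib, hsum_a, ← Finset.mul_sum]
  refine ⟨hLpos, ?_, ?_⟩
  · intro i hi
    rw [hr i, hi, hrsum, div_le_iff₀ hGR]
    have hms : Lam * m ≤ Lam * s i := mul_le_mul_of_nonneg_left (hlb i hi) hLpos.le
    nlinarith
  · intro i hi
    rw [hr i, hi, hs0 i hi, hrsum]
    have h1 : Lam * (∑ i, s i) ≥ Lam * (c * m) := mul_le_mul_of_nonneg_left hS hLpos.le
    have h2 : (0:ℝ) ≤ c + Lam * ∑ i, s i := by nlinarith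
    simp only [mul_zero, add_zero]
    positivity
end
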